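/- There exists a finite set of closed half-planes H and an assignment of every 2-coloring of H to a monochromatic point: for every 2-coloring of H there is a point covered by at least two half-planes of H all of the same color. Equivalently, the '2-fold' version of the half-plane coloring theorem fails: the chromatic number of the hypergraph whose hyperedges are the sets of half-planes covering points of depth at least 2 can be 3. -/
import Mathlib


/-- A closed half-plane in `ℝ²`. -/
def IsHalfPlane (h : Set (ℝ × ℝ)) : Prop :=
  ∃ a b c : ℝ, (a, b) ≠ (0, 0) ∧ h = {p : ℝ × ℝ | a * p.1 + b * p.2 ≤ c}

private def hp1 : Set (ℝ × ℝ) := {p : ℝ × ℝ | p.1 ≤ 0}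
private def hp2 : Set (ℝ × ℝ) := {p : ℝ × ℝ | p.2 ≤ 0}
private def hp3 : Set (ℝ × ℝ) := {p : ℝ × ℝ | 2 ≤ p.1 + p.2}

private lemma hp12 : hp1 ≠ hp2 := by
  intro h
  have := Set.ext_iff.mp h ((1 : ℝ), (-1 : ℝ))
  simp [hp1, hp2] at this
  norm_num at this

private lemma hp13 : hp1 ≠ hp3 := by
  intro h
  have := Set.ext_iff.mp h ((2 : ℝ), (0 : ℝ))
  simp [hp1, hp3] at this
  norm_num at this

private lemma hp23 : hp2 ≠ hp3 := by
  intro h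
  have := Set.ext_iff.mp h ((0 : ℝ), (2 : ℝ))
  simp [hp2, hp3] at this
  norm_num at this

/-- The depth-2 version of the half-plane 2-coloring theorem fails: there is a
finite set of closed half-planes such that for every 2-coloring some point of
depth at least 2 is covered only by half-planes of one color. -/
theorem depth_two_coloring_fails :
    ∃ H : Set (Set (ℝ × ℝ)), H.Finite ∧ (∀ h ∈ H, IsHalfPlane h) ∧
      ∀ χ : Set (ℝ × ℝ) → Bool,
        ∃ p : ℝ × ℝ, 2 ≤ {h ∈ H | p ∈ h}.ncard ∧
          ∃ c : Bool, ∀ h ∈ H, p ∈ h → χ h = c := by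
  refine ⟨{hp1, hp2, hp3}, (Set.finite_singleton _).insert _ |>.insert _, ?_, ?_⟩
  · rintro h (rfl | rfl | rfl)
    · exact ⟨1, 0, 0, by norm_num, by ext p; simp [hp1]⟩
    · exact ⟨0, 1, 0, by norm_num, by ext p; simp [hp2]⟩
    · exact ⟨-1, -1, -2, by norm_num, by ext p; simp [hp3]; constructor <;> intro <;> linarith⟩
  · intro χ
    by_cases h12 : χ hp1 = χ hp2
    · refine ⟨(0, 0), ?_, χ hp1, ?_⟩
      · have : {h ∈ ({hp1, hp2, hp3} : Set (Set (ℝ × ℝ))) | ((0 : ℝ), (0 : ℝ)) ∈ h} = {hp1, hp2} := by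
          ext h
          simp only [Set.mem_setOf_eq, Set.mem_insert_iff, Set.mem_singleton_iff]
          constructor
          · rintro ⟨(rfl | rfl | rfl), hm⟩
            · exact Or.inl rfl
            · exact Or.inr rfl
            · simp [hp3] at hm; norm_num at hm
          · rintro (rfl | rfl) <;> simp [hp1, hp2]
        rw [this, Set.ncard_pair hp12]
      · rintro h (rfl | rfl | rfl) hm
        · rfl
        · exact h12.symm
        · simp [hp3] at hm; norm_num at hm
    · by_cases h13 : χ hp1 = χ hp3
      · refine ⟨(0, 2), ?_, χ hp1, ?_⟩
        · have : {h ∈ ({hp1, hp2, hp3} : Set (Set (ℝ × ℝ))) | ((0 : ℝ), (2 : ℝ)) ∈ h} = {hp1, hp3} := by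
            ext h
            simp only [Set.mem_setOf_eq, Set.mem_insert_iff, Set.mem_singleton_iff]
            constructor
            · rintro ⟨(rfl | rfl | rfl), hm⟩
              · exact Or.inl rfl
              · simp [hp2] at hm; norm_num at hm
              · exact Or.inr rfl
            · rintro (rfl | rfl) <;> simp [hp1, hp3] <;> norm_num
          rw [this, Set.ncard_pair hp13]
        · rintro h (rfl | rfl | rfl) hm
          · rfl
          · simp [hp2] at hm; norm_num at hm
          · exact h13.symm
      · have h23 : χ hp2 = χ hp3 := by
          cases hb1 : χ hp1 <;> cases hb2 : χ hp2 <;> cases hb3 : χ hp3 <;>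
            simp_all
        refine ⟨(2, 0), ?_, χ hp2, ?_⟩
        · have : {h ∈ ({hp1, hp2, hp3} : Set (Set (ℝ × ℝ))) | ((2 : ℝ), (0 : ℝ)) ∈ h} = {hp2, hp3} := by
            ext h
            simp only [Set.mem_setOf_eq, Set.mem_insert_iff, Set.mem_singleton_iff]
            constructor
            · rintro ⟨(rfl | rfl | rfl), hm⟩
              · simp [hp1] at hm; norm_num at hm
              · exact Or.inl rfl
              · exact Or.inr rfl
            · rintro (rfl | rfl) <;> simp [hp2, hp3] <;> norm_num
          rw [this, Set.ncard_pair hp23]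
        · rintro h (rfl | rfl | rfl) hm
          · simp [hp1] at hm; norm_num at hm
          · rfl
          · exact h23.symm
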